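/- For every n ≥ 0 and every k ∈ ℤ, the Fourier–Stieltjes coefficient of μ_n satisfies μ̂_n(k) = ∏_{m=1}^{n} (1/3)(1 + 2 cos(2πk / 2^m)), where the empty product is 1. -/

import Mathlib

open MeasureTheory Filter Topology Real
open scoped ENNReal

noncomputable section

/-- Stern's diatomic sequence: s(0)=0, s(1)=1, s(2n)=s(n), s(2n+1)=s(n)+s(n+1). -/
def stern : ℕ → ℕ
  | 0 => 0
  | 1 => 1
  | n + 2 =>
    if h : n % 2 = 0 then stern (n / 2 + 1)
    else stern (n / 2 + 1) + stern (n / 2 + 2)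
decreasing_by all_goals omega
/-- The probability measure μ_n = 3^{-n} ∑_{m=0}^{2^n-1} s(2^n+m) δ_{m/2^n} on the 1-torus. -/
def sternMeasure (n : ℕ) : Measure UnitAddCircle :=
  ((3 : ℝ≥0∞) ^ n)⁻¹ • ∑ m ∈ Finset.range (2 ^ n),
    (stern (2 ^ n + m) : ℝ≥0∞) • Measure.dirac ((m / 2 ^ n : ℝ) : UnitAddCircle)
/-- The Fourier–Stieltjes coefficient ν̂(k) = ∫_𝕋 e^{-2πikx} dν(x) of a measure ν on the 1-torus. -/
def fourierCoeffMeasure (ν : Measure UnitAddCircle) (k : ℤ) : ℂ :=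
  ∫ x, fourier (-k) x ∂ν

lemma stern_two_mul (n : ℕ) : stern (2 * n) = stern n := by
  match n with
  | 0 => rfl
  | n + 1 =>
    rw [show 2 * (n + 1) = 2 * n + 2 by ring, stern, dif_pos (by omega)]
    congr 1
    omega

lemma stern_two_mul_add_one (n : ℕ) : stern (2 * n + 1) = stern n + stern (n + 1) := by
  match n with
  | 0 => simp [stern]
  | n + 1 =>
    rw [show 2 * (n + 1) + 1 = (2 * n + 1) + 2 by ring, stern, dif_neg (by omega)]
    congr 2 <;> omega

lemma stern_two_pow (n : ℕ) : stern (2 ^ n) = 1 := by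
  induction n with
  | zero => simp [stern]
  | succ n ih => rw [pow_succ, mul_comm, stern_two_mul]; exact ih

lemma sum_range_two_mul {M : Type*} [AddCommMonoid M] (N : ℕ) (f : ℕ → M) :
    ∑ m ∈ Finset.range (2 * N), f m
      = ∑ m ∈ Finset.range N, (f (2 * m) + f (2 * m + 1)) := by
  induction N with
  | zero => simp
  | succ N ih =>
    rw [Finset.sum_range_succ, ← ih, show 2 * (N + 1) = (2 * N + 1) + 1 by ring,
      Finset.sum_range_succ, Finset.sum_range_succ, add_assoc]

/-- The basic root of unity at level `n`. -/
def wz (n : ℕ) (k : ℤ) : ℂ :=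
  Complex.exp ((-(2 * π * k / 2 ^ n) : ℝ) * Complex.I)

lemma wz_ne_zero (n : ℕ) (k : ℤ) : wz n k ≠ 0 := Complex.exp_ne_zero _

lemma wz_sq (n : ℕ) (k : ℤ) : wz (n + 1) k ^ 2 = wz n k := by
  rw [wz, wz, ← Complex.exp_nat_mul]
  congr 1
  have h2 : ((2 : ℂ) ^ n) ≠ 0 := pow_ne_zero _ two_ne_zero
  push_cast
  field_simp
  ring

lemma wz_pow_two_pow (n : ℕ) (k : ℤ) : wz n k ^ (2 ^ n) = 1 := by
  rw [wz, ← Complex.exp_nat_mul]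
  rw [show ((2 ^ n : ℕ) : ℂ) * ((-(2 * π * k / 2 ^ n) : ℝ) * Complex.I)
      = (-k : ℤ) * (2 * π * Complex.I) by
    have h2 : ((2 : ℂ) ^ n) ≠ 0 := pow_ne_zero _ two_ne_zero
    push_cast
    field_simp]
  exact Complex.exp_int_mul_two_pi_mul_I _

lemma exp_add_exp_neg (z : ℂ) :
    Complex.exp (-(z * Complex.I)) + Complex.exp (z * Complex.I) = 2 * Complex.cos z := by
  rw [show -(z * Complex.I) = (-z) * Complex.I by ring, Complex.exp_mul_I, Complex.exp_mul_I,
    Complex.cos_neg, Complex.sin_neg]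
  ring

lemma wz_add_inv (n : ℕ) (k : ℤ) :
    wz n k + (wz n k)⁻¹ = 2 * (Real.cos (2 * π * k / 2 ^ n) : ℂ) := by
  have h : wz n k
      = Complex.exp (-((((2 * π * (k : ℝ) / 2 ^ n) : ℝ) : ℂ) * Complex.I)) := by
    rw [wz]; congr 1; push_cast; ring
  rw [h, Complex.exp_neg, inv_inv, ← Complex.exp_neg, exp_add_exp_neg,
    Complex.ofReal_cos]

lemma fourier_eq_wz_pow (n : ℕ) (k : ℤ) (m : ℕ) :
    (fourier (-k) (((m : ℝ) / 2 ^ n : ℝ) : UnitAddCircle) : ℂ) = wz n k ^ m := by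
  rw [fourier_coe_apply, wz, ← Complex.exp_nat_mul]
  congr 1
  have h2 : ((2 : ℂ) ^ n) ≠ 0 := pow_ne_zero _ two_ne_zero
  push_cast
  field_simp

/-- The unnormalized exponential sum. -/
def Ssum (n : ℕ) (k : ℤ) : ℂ :=
  ∑ m ∈ Finset.range (2 ^ n), (stern (2 ^ n + m) : ℂ) * wz n k ^ m

lemma Ssum_succ (n : ℕ) (k : ℤ) :
    Ssum (n + 1) k = (1 + 2 * (Real.cos (2 * π * k / 2 ^ (n + 1)) : ℂ)) * Ssum n k := by
  set w := wz (n + 1) k with hw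
  set u := wz n k with hu
  have hw2 : w ^ 2 = u := wz_sq n k
  have hwne : w ≠ 0 := wz_ne_zero _ _
  set A := ∑ m ∈ Finset.range (2 ^ n), (stern (2 ^ n + m) : ℂ) * u ^ m with hA
  set C := ∑ m ∈ Finset.range (2 ^ n), (stern (2 ^ n + m + 1) : ℂ) * u ^ m with hC
  have hSn : Ssum n k = A := rfl
  have hsplit : Ssum (n + 1) k
      = ∑ m ∈ Finset.range (2 ^ n),
        ((stern (2 ^ (n + 1) + 2 * m) : ℂ) * w ^ (2 * m)
          + (stern (2 ^ (n + 1) + (2 * m + 1)) : ℂ) * w ^ (2 * m + 1)) := by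
    rw [Ssum, show (2 : ℕ) ^ (n + 1) = 2 * 2 ^ n by ring, sum_range_two_mul]
  have hterm : ∀ m ∈ Finset.range (2 ^ n),
      (stern (2 ^ (n + 1) + 2 * m) : ℂ) * w ^ (2 * m)
        + (stern (2 ^ (n + 1) + (2 * m + 1)) : ℂ) * w ^ (2 * m + 1)
      = (stern (2 ^ n + m) : ℂ) * u ^ m
        + (w * ((stern (2 ^ n + m) : ℂ) * u ^ m)
            + w * ((stern (2 ^ n + m + 1) : ℂ) * u ^ m)) := by
    intro m _
    have h1 : 2 ^ (n + 1) + 2 * m = 2 * (2 ^ n + m) := by ring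
    have h2 : 2 ^ (n + 1) + (2 * m + 1) = 2 * (2 ^ n + m) + 1 := by ring
    have hp1 : w ^ (2 * m) = u ^ m := by rw [pow_mul, hw2]
    have hp2 : w ^ (2 * m + 1) = w * u ^ m := by rw [pow_succ, pow_mul, hw2, mul_comm]
    rw [h1, h2, stern_two_mul, stern_two_mul_add_one, hp1, hp2]
    push_cast
    ring
  have hsum : Ssum (n + 1) k = A + (w * A + w * C) := by
    rw [hsplit, Finset.sum_congr rfl hterm, Finset.sum_add_distrib,
      Finset.sum_add_distrib, ← Finset.mul_sum, ← Finset.mul_sum]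
  -- the shift identity: u * C = A
  have hshift : ∀ m ∈ Finset.range (2 ^ n),
      u * ((stern (2 ^ n + m + 1) : ℂ) * u ^ m)
        = (stern (2 ^ n + (m + 1)) : ℂ) * u ^ (m + 1) := by
    intro m _
    rw [pow_succ]
    ring_nf
  have h1 := Finset.sum_range_succ' (fun m => (stern (2 ^ n + m) : ℂ) * u ^ m) (2 ^ n)
  have h2 := Finset.sum_range_succ (fun m => (stern (2 ^ n + m) : ℂ) * u ^ m) (2 ^ n)
  have hlast : (stern (2 ^ n + 2 ^ n) : ℂ) * u ^ (2 ^ n) = 1 := by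
    rw [show 2 ^ n + 2 ^ n = 2 ^ (n + 1) by ring, stern_two_pow, hu, wz_pow_two_pow]
    simp
  have hfirst : (stern (2 ^ n + 0) : ℂ) * u ^ 0 = 1 := by
    simp [stern_two_pow]
  have hT : u * C = A := by
    rw [hC, Finset.mul_sum, Finset.sum_congr rfl hshift, hA]
    linear_combination h2 - h1 + hlast - hfirst
  have hwC : w * C = w⁻¹ * A := by
    rw [inv_mul_eq_div, eq_div_iff hwne]
    rw [← hw2] at hT
    linear_combination hT
  rw [hsum, hwC, hSn, ← wz_add_inv (n + 1) k, ← hw]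
  field_simp

lemma Ssum_prod (n : ℕ) (k : ℤ) :
    Ssum n k = ((∏ m ∈ Finset.Icc 1 n, (1 + 2 * Real.cos (2 * π * (k : ℝ) / 2 ^ m)) : ℝ) : ℂ) := by
  induction n with
  | zero =>
    rw [show Finset.Icc 1 0 = (∅ : Finset ℕ) by rfl]
    simp [Ssum, stern]
  | succ n ih =>
    rw [Ssum_succ, ih, Finset.prod_Icc_succ_top (by omega : 1 ≤ n + 1)]
    push_cast
    ring

lemma fourier_norm_le (k : ℤ) (x : UnitAddCircle) : ‖(fourier (-k) x : ℂ)‖ ≤ 1 := by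
  rw [fourier_apply]
  simp [Circle.norm_coe]

lemma integrable_fourier_neg (k : ℤ) (μ : Measure UnitAddCircle) [IsFiniteMeasure μ] :
    Integrable (fun x : UnitAddCircle => (fourier (-k) x : ℂ)) μ := by
  refine Integrable.mono' (integrable_const (1 : ℝ))
    ((map_continuous (fourier (-k))).aestronglyMeasurable) ?_
  filter_upwards with x using fourier_norm_le k x

lemma fourierCoeff_eq_Ssum (n : ℕ) (k : ℤ) :
    fourierCoeffMeasure (sternMeasure n) k = ((3 : ℂ) ^ n)⁻¹ * Ssum n k := by
  rw [fourierCoeffMeasure, sternMeasure, integral_smul_measure]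
  rw [integral_finset_sum_measure (fun m _ => ?_)]
  · simp_rw [integral_smul_measure, integral_dirac]
    rw [ENNReal.toReal_inv, ENNReal.toReal_pow]
    have h3 : ((3 : ℝ≥0∞)).toReal = 3 := by simp
    rw [h3]
    rw [Ssum, Finset.mul_sum]
    rw [Finset.smul_sum]
    refine Finset.sum_congr rfl fun m _ => ?_
    rw [fourier_eq_wz_pow n k m, ENNReal.toReal_natCast]
    rw [smul_smul]
    rw [Complex.real_smul]
    push_cast
    ring
  · have : IsFiniteMeasure ((stern (2 ^ n + m) : ℝ≥0∞) •
        Measure.dirac (((m : ℝ) / 2 ^ n : ℝ) : UnitAddCircle)) :=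
      Measure.smul_finite _ (ENNReal.natCast_ne_top _)
    exact integrable_fourier_neg k _

/-- For every n ≥ 0 and k ∈ ℤ: μ̂_n(k) = ∏_{m=1}^{n} (1/3)(1 + 2 cos(2πk/2^m)). -/
theorem fourierCoeff_sternMeasure (n : ℕ) (k : ℤ) :
    fourierCoeffMeasure (sternMeasure n) k =
      ((∏ m ∈ Finset.Icc 1 n,
        (1 / 3) * (1 + 2 * Real.cos (2 * π * (k : ℝ) / 2 ^ m)) : ℝ) : ℂ) := by
  rw [fourierCoeff_eq_Ssum, Ssum_prod]
  have hprod : (∏ m ∈ Finset.Icc 1 n,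
      (1 / 3 : ℝ) * (1 + 2 * Real.cos (2 * π * (k : ℝ) / 2 ^ m)))
      = ((3 : ℝ) ^ n)⁻¹ * ∏ m ∈ Finset.Icc 1 n, (1 + 2 * Real.cos (2 * π * (k : ℝ) / 2 ^ m)) := by
    rw [Finset.prod_mul_distrib, Finset.prod_const, Nat.card_Icc,
      show n + 1 - 1 = n from rfl, one_div, inv_pow]
  rw [hprod]
  push_cast
  ring
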